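/- Let P(X) = Σ_{k=0}^d X^k a_k be a quaternionic polynomial of degree d ≥ 1 with quaternion coefficients a_k (written on the right), and suppose |P(x)| ≤ M for all quaternions x with |x| = 1. Then the derivative P'(X) = Σ_{k=1}^d X^{k-1} (k a_k) satisfies |P'(x)| ≤ d·M for all quaternions x with |x| = 1. -/

import Mathlib

open Finset

section AUX


lemma QB.sum_pow_eq (N : ℕ) (ω : ℂ) (hω : IsPrimitiveRoot ω N) (m : ℕ) :
    ∑ j ∈ Finset.range N, ω ^ (j * m) = if (m : ZMod N) = 0 then (N : ℂ) else 0 := by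
  have hωN : ω ^ N = 1 := hω.pow_eq_one
  by_cases h : (m : ZMod N) = 0
  · rw [if_pos h]
    obtain ⟨c, rfl⟩ := (ZMod.natCast_eq_zero_iff m N).mp h
    rw [Finset.sum_congr rfl (fun j _ => by
      rw [show j * (N * c) = N * (j * c) by ring, pow_mul, hωN, one_pow])]
    simp
  · rw [if_neg h]
    have h1 : ω ^ m ≠ 1 := fun hh =>
      h ((ZMod.natCast_eq_zero_iff m N).mpr ((hω.pow_eq_one_iff_dvd m).mp hh))
    rw [Finset.sum_congr rfl (fun j _ => by rw [← pow_mul, mul_comm] : ∀ j ∈ Finset.range N, ω ^ (j*m) = (ω ^ m) ^ j),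
      geom_sum_eq h1, ← pow_mul, mul_comm m N, pow_mul, hωN, one_pow, sub_self, zero_div]

lemma QB.key (d : ℕ) (ω : ℂ) (hω : IsPrimitiveRoot ω (2*d+1)) (k : ℕ) (hk : k ≤ d) :
    ∑ j ∈ range (2*d+1), (ω ^ (j*(d+1)) * (∑ p ∈ range d, ω ^ (j*p)) *
        (∑ q ∈ range d, ω ^ (2*d*(j*q))) * ω ^ (j*k))
      = ((2*d+1 : ℕ) : ℂ) * k := by
  have hN0 : ((2*d+1 : ℕ) : ZMod (2*d+1)) = 0 := ZMod.natCast_self (2*d+1)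
  have hcond : ∀ p q : ℕ, p ∈ range d → q ∈ range d →
      ((((d+1+p+2*d*q+k : ℕ)) : ZMod (2*d+1)) = 0 ↔ p = (d-k)+q) := by
    intro p q hp hq
    simp only [mem_range] at hp hq
    have hcast : (((d+1+p+2*d*q+k : ℕ)) : ZMod (2*d+1))
        = ((p+k : ℕ) : ZMod (2*d+1)) - ((d+q : ℕ) : ZMod (2*d+1)) := by
      push_cast
      push_cast at hN0
      linear_combination ((q : ZMod (2*d+1)) + 1) * hN0
    rw [hcast, sub_eq_zero, ZMod.natCast_eq_natCast_iff',
      Nat.mod_eq_of_lt (by omega), Nat.mod_eq_of_lt (by omega)]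
    omega
  calc ∑ j ∈ range (2*d+1), (ω ^ (j*(d+1)) * (∑ p ∈ range d, ω ^ (j*p)) *
        (∑ q ∈ range d, ω ^ (2*d*(j*q))) * ω ^ (j*k))
      = ∑ j ∈ range (2*d+1), ∑ p ∈ range d, ∑ q ∈ range d,
          ω ^ (j * (d+1+p+2*d*q+k)) := by
        refine Finset.sum_congr rfl fun j _ => ?_
        simp only [Finset.mul_sum, Finset.sum_mul]
        rw [Finset.sum_comm]
        refine Finset.sum_congr rfl fun p _ => Finset.sum_congr rfl fun q _ => ?_
        simp only [← pow_add]
        congr 1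
        ring
    _ = ∑ p ∈ range d, ∑ q ∈ range d, ∑ j ∈ range (2*d+1),
          ω ^ (j * (d+1+p+2*d*q+k)) := by
        rw [Finset.sum_comm]
        exact Finset.sum_congr rfl fun p _ => Finset.sum_comm
    _ = ∑ p ∈ range d, ∑ q ∈ range d,
          (if (((d+1+p+2*d*q+k : ℕ)) : ZMod (2*d+1)) = 0 then ((2*d+1 : ℕ) : ℂ) else 0) := by
        refine Finset.sum_congr rfl fun p _ => Finset.sum_congr rfl fun q _ => ?_
        exact QB.sum_pow_eq (2*d+1) ω hω _
    _ = ∑ q ∈ range d, ∑ p ∈ range d,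
          (if p = (d-k)+q then ((2*d+1 : ℕ) : ℂ) else 0) := by
        rw [Finset.sum_comm]
        refine Finset.sum_congr rfl fun q hq => Finset.sum_congr rfl fun p hp => ?_
        exact if_congr (hcond p q hp hq) rfl rfl
    _ = ∑ q ∈ range d, (if (d-k)+q ∈ range d then ((2*d+1 : ℕ) : ℂ) else 0) := by
        refine Finset.sum_congr rfl fun q _ => ?_
        exact Finset.sum_ite_eq' (range d) ((d-k)+q) (fun _ => ((2*d+1 : ℕ) : ℂ))
    _ = ∑ q ∈ range d, (if q ∈ range k then ((2*d+1 : ℕ) : ℂ) else 0) := by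
        refine Finset.sum_congr rfl fun q hq => if_congr ?_ rfl rfl
        simp only [mem_range] at *
        omega
    _ = ∑ q ∈ range d ∩ range k, ((2*d+1 : ℕ) : ℂ) := Finset.sum_ite_mem _ _ _
    _ = ((2*d+1 : ℕ) : ℂ) * k := by
        rw [Finset.inter_eq_right.mpr (Finset.range_subset_range.mpr hk), Finset.sum_const,
          Finset.card_range, nsmul_eq_mul, mul_comm]

lemma QB.parseval (d : ℕ) (ω : ℂ) (hω : IsPrimitiveRoot ω (2*d+1)) :
    ∑ j ∈ range (2*d+1), ((∑ p ∈ range d, ω ^ (j*p)) * (∑ q ∈ range d, ω ^ (2*d*(j*q))))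
      = ((2*d+1 : ℕ) : ℂ) * d := by
  have hN0 : ((2*d+1 : ℕ) : ZMod (2*d+1)) = 0 := ZMod.natCast_self (2*d+1)
  have hcond : ∀ p q : ℕ, p ∈ range d → q ∈ range d →
      ((((p+2*d*q : ℕ)) : ZMod (2*d+1)) = 0 ↔ p = q) := by
    intro p q hp hq
    simp only [mem_range] at hp hq
    have hcast : (((p+2*d*q : ℕ)) : ZMod (2*d+1))
        = ((p : ℕ) : ZMod (2*d+1)) - ((q : ℕ) : ZMod (2*d+1)) := by
      push_cast
      push_cast at hN0
      linear_combination (q : ZMod (2*d+1)) * hN0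
    rw [hcast, sub_eq_zero, ZMod.natCast_eq_natCast_iff',
      Nat.mod_eq_of_lt (by omega), Nat.mod_eq_of_lt (by omega)]
  calc ∑ j ∈ range (2*d+1), ((∑ p ∈ range d, ω ^ (j*p)) * (∑ q ∈ range d, ω ^ (2*d*(j*q))))
      = ∑ j ∈ range (2*d+1), ∑ p ∈ range d, ∑ q ∈ range d, ω ^ (j * (p+2*d*q)) := by
        refine Finset.sum_congr rfl fun j _ => ?_
        simp only [Finset.mul_sum, Finset.sum_mul]
        rw [Finset.sum_comm]
        refine Finset.sum_congr rfl fun p _ => Finset.sum_congr rfl fun q _ => ?_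
        simp only [← pow_add]
        congr 1
        ring
    _ = ∑ p ∈ range d, ∑ q ∈ range d, ∑ j ∈ range (2*d+1), ω ^ (j * (p+2*d*q)) := by
        rw [Finset.sum_comm]
        exact Finset.sum_congr rfl fun p _ => Finset.sum_comm
    _ = ∑ q ∈ range d, ∑ p ∈ range d,
          (if p = q then ((2*d+1 : ℕ) : ℂ) else 0) := by
        rw [Finset.sum_comm]
        refine Finset.sum_congr rfl fun q hq => Finset.sum_congr rfl fun p hp => ?_
        rw [QB.sum_pow_eq (2*d+1) ω hω _]
        exact if_congr (hcond p q hp hq) rfl rfl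
    _ = ∑ q ∈ range d, (if q ∈ range d then ((2*d+1 : ℕ) : ℂ) else 0) := by
        refine Finset.sum_congr rfl fun q _ => ?_
        exact Finset.sum_ite_eq' (range d) q (fun _ => ((2*d+1 : ℕ) : ℂ))
    _ = ((2*d+1 : ℕ) : ℂ) * d := by
        rw [Finset.sum_congr rfl (fun q hq => if_pos hq), Finset.sum_const,
          Finset.card_range, nsmul_eq_mul, mul_comm]


lemma QB.conj_sum (d : ℕ) (ω : ℂ) (hω : IsPrimitiveRoot ω (2*d+1)) (j : ℕ) :
    (∑ q ∈ range d, ω ^ (2*d*(j*q))) = (starRingEnd ℂ) (∑ q ∈ range d, ω ^ (j*q)) := by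
  rw [map_sum]
  refine Finset.sum_congr rfl fun q _ => ?_
  have hωN : ω ^ (2*d+1) = 1 := hω.pow_eq_one
  have hne : ω ^ (j*q) ≠ 0 := pow_ne_zero _ (hω.ne_zero (by omega))
  have h1 : ω ^ (2*d*(j*q)) * ω ^ (j*q) = 1 := by
    rw [← pow_add, show 2*d*(j*q) + j*q = (2*d+1)*(j*q) by ring, pow_mul, hωN, one_pow]
  have habs : ‖ω‖ = 1 := Complex.norm_eq_one_of_pow_eq_one hωN (by omega)
  have h2 : (starRingEnd ℂ) (ω ^ (j*q)) * ω ^ (j*q) = 1 := by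
    rw [mul_comm, Complex.mul_conj]
    have ha : ‖ω ^ (j*q)‖ = 1 := by rw [norm_pow, habs, one_pow]
    rw [← Complex.sq_norm, ha]
    norm_num
  exact mul_right_cancel₀ hne (h1.trans h2.symm)

lemma QB.slice (x : Quaternion ℝ) :
    ∃ φ : ℂ →ₐ[ℝ] Quaternion ℝ,
      (∀ z : ℂ, ‖φ z‖ = ‖z‖) ∧ φ ⟨x.re, ‖x.im‖⟩ = x := by
  obtain ⟨I, hre, hns, him⟩ : ∃ I : Quaternion ℝ,
      I.re = 0 ∧ Quaternion.normSq I = 1 ∧ ‖x.im‖ • I = x.im := by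
    by_cases h : x.im = 0
    · refine ⟨(⟨0,1,0,0⟩ : Quaternion ℝ), rfl, ?_, ?_⟩
      · exact (Quaternion.normSq_def' (⟨0,1,0,0⟩ : Quaternion ℝ)).trans (by norm_num)
      · simp [h]; exact zero_smul ℝ _
    · refine ⟨‖x.im‖⁻¹ • x.im, ?_, ?_, ?_⟩
      · simp [Quaternion.re_smul, Quaternion.re_im]
      · rw [Quaternion.normSq_smul, Quaternion.normSq_eq_norm_mul_self]
        have h0 : ‖x.im‖ ≠ 0 := norm_ne_zero_iff.mpr h
        field_simp
      · rw [smul_inv_smul₀ (norm_ne_zero_iff.mpr h)]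
  have hI2 : I * I = -1 := by
    have hstar : star I = -I := Quaternion.star_eq_neg.mpr hre
    have h := Quaternion.star_mul_self I
    rw [hstar, hns, neg_mul] at h
    have h1 : -(I * I) = 1 := by rw [h]; norm_num
    exact neg_eq_iff_eq_neg.mp h1
  refine ⟨Complex.liftAux I hI2, ?_, ?_⟩
  · intro z
    have hI : I.imI^2 + I.imJ^2 + I.imK^2 = 1 := by
      have h2 := hns
      rw [Quaternion.normSq_def', hre] at h2
      linarith
    have hsq : Quaternion.normSq (Complex.liftAux I hI2 z) = Complex.normSq z := by
      rw [Complex.liftAux_apply, Quaternion.normSq_def', Complex.normSq_apply]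
      simp only [Quaternion.re_add, Quaternion.imI_add, Quaternion.imJ_add, Quaternion.imK_add,
        Quaternion.re_smul, Quaternion.imI_smul, Quaternion.imJ_smul, Quaternion.imK_smul,
        Quaternion.algebraMap_def, Quaternion.re_coe, Quaternion.imI_coe, Quaternion.imJ_coe,
        Quaternion.imK_coe, smul_eq_mul, hre]
      ring_nf
      linear_combination z.im^2 * hI
    have h3 : ‖Complex.liftAux I hI2 z‖ * ‖Complex.liftAux I hI2 z‖
        = ‖z‖ * ‖z‖ := by
      rw [← Quaternion.normSq_eq_norm_mul_self, hsq, ← Complex.sq_norm, sq]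
    exact (mul_self_inj_of_nonneg (norm_nonneg _) (norm_nonneg _)).mp h3
  · rw [Complex.liftAux_apply]
    show algebraMap ℝ (Quaternion ℝ) x.re + ‖x.im‖ • I = x
    rw [him, Quaternion.algebraMap_def, Quaternion.re_add_im]
end AUX

/-- **Quaternionic Bernstein inequality.**
If `P(X) = Σ_{k=0}^d X^k a_k` is a quaternionic polynomial of degree `d ≥ 1`
(coefficients on the right) with `‖P(x)‖ ≤ M` whenever `‖x‖ = 1`, then its formal
derivative `P'(X) = Σ_{k=1}^d X^(k-1) (k a_k)` satisfies `‖P'(x)‖ ≤ d * M` for `‖x‖ = 1`. -/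
theorem quaternionic_bernstein_inequality
    (d : ℕ) (hd : 1 ≤ d) (a : ℕ → Quaternion ℝ) (had : a d ≠ 0) (M : ℝ)
    (hM : ∀ x : Quaternion ℝ, ‖x‖ = 1 →
      ‖∑ k ∈ Finset.range (d + 1), x ^ k * a k‖ ≤ M) :
    ∀ x : Quaternion ℝ, ‖x‖ = 1 →
      ‖∑ k ∈ Finset.range d, x ^ k * (((k + 1 : ℕ) : Quaternion ℝ) * a (k + 1))‖ ≤ d * M := by
  intro x hx
  obtain ⟨φ, hφn, hφx⟩ := QB.slice x
  set z₀ : ℂ := ⟨x.re, ‖x.im‖⟩ with hz₀def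
  have hz₀ : ‖z₀‖ = 1 := by rw [← hφn z₀, hφx, hx]
  set ω : ℂ := Complex.exp (2 * Real.pi * Complex.I / ((2*d+1 : ℕ) : ℂ)) with hωdef
  have hω : IsPrimitiveRoot ω (2*d+1) := Complex.isPrimitiveRoot_exp _ (by omega)
  have habsω : ‖ω‖ = 1 := Complex.norm_eq_one_of_pow_eq_one hω.pow_eq_one (by omega)
  set D : ℕ → ℂ := fun j => ∑ p ∈ range d, ω ^ (j*p) with hDdef
  set E : ℕ → ℂ := fun j => ∑ q ∈ range d, ω ^ (2*d*(j*q)) with hEdef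
  set cc : ℕ → ℂ := fun j => ω ^ (j*(d+1)) * D j * E j with hccdef
  set T : Quaternion ℝ :=
    ∑ k ∈ Finset.range d, x ^ k * (((k + 1 : ℕ) : Quaternion ℝ) * a (k + 1)) with hTdef
  -- the master algebraic identity
  have hS : ∑ j ∈ range (2*d+1), φ (cc j) * (∑ k ∈ range (d+1), (φ (z₀ * ω^j))^k * a k)
      = ∑ k ∈ range (d+1), (((2*d+1) * k : ℕ) : Quaternion ℝ) * (x^k * a k) := by
    calc ∑ j ∈ range (2*d+1), φ (cc j) * (∑ k ∈ range (d+1), (φ (z₀ * ω^j))^k * a k)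
        = ∑ j ∈ range (2*d+1), ∑ k ∈ range (d+1), φ (cc j * ω^(j*k) * z₀^k) * a k := by
          refine Finset.sum_congr rfl fun j _ => ?_
          rw [Finset.mul_sum]
          refine Finset.sum_congr rfl fun k _ => ?_
          rw [← map_pow, ← mul_assoc, ← map_mul]
          congr 2
          rw [mul_pow, ← pow_mul]
          ring
      _ = ∑ k ∈ range (d+1), ∑ j ∈ range (2*d+1), φ (cc j * ω^(j*k) * z₀^k) * a k :=
          Finset.sum_comm
      _ = ∑ k ∈ range (d+1), (((2*d+1) * k : ℕ) : Quaternion ℝ) * (x^k * a k) := by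
          refine Finset.sum_congr rfl fun k hk => ?_
          have hkd : k ≤ d := by
            have := Finset.mem_range.mp hk; omega
          have hkey : (∑ j ∈ range (2*d+1), cc j * ω^(j*k)) = ((2*d+1 : ℕ) : ℂ) * k := by
            simpa only [hccdef] using QB.key d ω hω k hkd
          calc ∑ j ∈ range (2*d+1), φ (cc j * ω^(j*k) * z₀^k) * a k
              = φ ((∑ j ∈ range (2*d+1), cc j * ω^(j*k)) * z₀^k) * a k := by
                rw [Finset.sum_mul, map_sum, Finset.sum_mul]
            _ = (((2*d+1) * k : ℕ) : Quaternion ℝ) * (x^k * a k) := by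
                rw [hkey, map_mul, map_pow]
                have h1 : ((2*d+1 : ℕ) : ℂ) * (k : ℂ) = (((2*d+1) * k : ℕ) : ℂ) := by push_cast; ring
                rw [h1, map_natCast, hφx, mul_assoc]
  -- rewrite RHS as (2d+1) • (x * T)
  have hT : ∑ k ∈ range (d+1), (((2*d+1) * k : ℕ) : Quaternion ℝ) * (x^k * a k)
      = ((2*d+1 : ℕ) : Quaternion ℝ) * (x * T) := by
    rw [Finset.sum_range_succ']
    simp only [Nat.mul_zero, Nat.cast_zero, zero_mul, add_zero, pow_zero]
    rw [hTdef, Finset.mul_sum, Finset.mul_sum]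
    refine Finset.sum_congr rfl fun k _ => ?_
    simp only [← nsmul_eq_mul, smul_smul, mul_smul_comm]
    rw [← mul_assoc x, ← pow_succ', mul_comm (2*d+1) (k+1)]
  -- norm bounds
  have hPj : ∀ j : ℕ, ‖∑ k ∈ range (d+1), (φ (z₀ * ω^j))^k * a k‖ ≤ M := by
    intro j
    refine hM _ ?_
    rw [hφn, norm_mul, hz₀, norm_pow, habsω, one_pow, one_mul]
  have habscc : ∀ j : ℕ, ‖cc j‖ = Complex.normSq (D j) := by
    intro j
    rw [hccdef]
    simp only []
    rw [show E j = (starRingEnd ℂ) (D j) from QB.conj_sum d ω hω j]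
    rw [norm_mul, norm_mul, norm_pow, habsω, one_pow, one_mul, Complex.norm_conj, ← Complex.sq_norm, sq]
  have hpars : ∑ j ∈ range (2*d+1), (Complex.normSq (D j) : ℝ) = ((2*d+1) * d : ℝ) := by
    have h := QB.parseval d ω hω
    have h2 : ∑ j ∈ range (2*d+1), ((Complex.normSq (D j) : ℝ) : ℂ) = ((2*d+1 : ℕ) : ℂ) * d := by
      rw [← h]
      refine Finset.sum_congr rfl fun j _ => ?_
      simp only [hDdef]
      rw [show (∑ q ∈ range d, ω ^ (2*d*(j*q))) = (starRingEnd ℂ) (∑ p ∈ range d, ω ^ (j*p))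
        from QB.conj_sum d ω hω j, Complex.mul_conj]
    have h3 := h2
    rw [← Complex.ofReal_sum] at h3
    exact_mod_cast h3
  have hbound : ‖∑ j ∈ range (2*d+1), φ (cc j) * (∑ k ∈ range (d+1), (φ (z₀ * ω^j))^k * a k)‖
      ≤ ((2*d+1) * d : ℝ) * M := by
    calc ‖∑ j ∈ range (2*d+1), φ (cc j) * (∑ k ∈ range (d+1), (φ (z₀ * ω^j))^k * a k)‖
        ≤ ∑ j ∈ range (2*d+1), ‖φ (cc j) * (∑ k ∈ range (d+1), (φ (z₀ * ω^j))^k * a k)‖ :=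
          norm_sum_le _ _
      _ ≤ ∑ j ∈ range (2*d+1), (Complex.normSq (D j) : ℝ) * M := by
          refine Finset.sum_le_sum fun j _ => ?_
          rw [norm_mul, hφn, habscc]
          exact mul_le_mul_of_nonneg_left (hPj j) (Complex.normSq_nonneg _)
      _ = ((2*d+1) * d : ℝ) * M := by rw [← Finset.sum_mul, hpars]
  rw [hS, hT] at hbound
  have hnn : ‖((2*d+1 : ℕ) : Quaternion ℝ) * (x * T)‖ = ((2*d+1 : ℕ) : ℝ) * ‖T‖ := by
    rw [norm_mul, norm_mul, hx, one_mul, ← Quaternion.coe_natCast, Quaternion.norm_coe,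
      Real.norm_natCast]
  rw [hnn] at hbound
  have h2d : (0 : ℝ) < ((2*d+1 : ℕ) : ℝ) := by positivity
  have : ((2*d+1 : ℕ) : ℝ) * ‖T‖ ≤ ((2*d+1 : ℕ) : ℝ) * ((d : ℝ) * M) := by
    calc ((2*d+1 : ℕ) : ℝ) * ‖T‖ ≤ ((2*d+1) * d : ℝ) * M := hbound
      _ = ((2*d+1 : ℕ) : ℝ) * ((d : ℝ) * M) := by push_cast; ring
  exact le_of_mul_le_mul_left this h2d
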